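/- Let m ≥ 1 and K = m². For the hierarchical topology α (m groups of m users; α_kk = g for k in group g; α_ij = g-1 if j is in group g and i is in a group of index ≤ g with i ≠ j; α_ij = 0 otherwise), the binary sum GDoF equals m: for every subset T ⊆ [K] of active users, Σ_{k∈T}(α_kk - max_{j∈T, j≠k} α_kj)^+ ≤ m, and this value is achieved (e.g., by activating all m users in a single group, or one user of group m). -/
import Mathlib

open Finset

/-- Positive part `(x)^+ = max(x,0)`. -/
noncomputable def pPart (x : ℝ) : ℝ := max x 0

/-- TIN GDoF of user `k` under topology `α` and power allocation `r`:
`d_k(α,r) = (α_kk + r_k - max_{j≠k} (α_kj + r_j)^+)^+` (max over the empty set is 0). -/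
noncomputable def gdof {K : ℕ} (α : Fin K → Fin K → ℝ) (r : Fin K → ℝ) (k : Fin K) : ℝ :=
  pPart (α k k + r k -
    ((Finset.univ.erase k).fold max 0 fun j => pPart (α k j + r j)))

/-- Sum GDoF under allocation `r`. -/
noncomputable def sumGdof {K : ℕ} (α : Fin K → Fin K → ℝ) (r : Fin K → ℝ) : ℝ :=
  ∑ k, gdof α r k

/-- Optimal-power-control sum GDoF: supremum over all allocations with `r_k ≤ 0`. -/
noncomputable def Dopt {K : ℕ} (α : Fin K → Fin K → ℝ) : ℝ :=
  sSup {x : ℝ | ∃ r : Fin K → ℝ, (∀ k, r k ≤ 0) ∧ x = sumGdof α r}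

/-- Sum GDoF achieved by binary power control with active set `T`:
`Σ_{k∈T} (α_kk - max_{j∈T, j≠k} α_kj)^+` (max over the empty set is 0). -/
noncomputable def binSum {K : ℕ} (α : Fin K → Fin K → ℝ) (T : Finset (Fin K)) : ℝ :=
  ∑ k ∈ T, pPart (α k k - ((T.erase k).fold max 0 fun j => α k j))

/-- Binary-power-control sum GDoF: maximum over all subsets of active users. -/
noncomputable def Dbin {K : ℕ} (α : Fin K → Fin K → ℝ) : ℝ :=
  (Finset.univ : Finset (Finset (Fin K))).sup' ⟨∅, Finset.mem_univ ∅⟩ (binSum α)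

lemma pPart_mono {x y : ℝ} (h : x ≤ y) : pPart x ≤ pPart y :=
  max_le_max h le_rfl

lemma pPart_nonpos {x : ℝ} (h : x ≤ 0) : pPart x = 0 := max_eq_right h

lemma card_group_le (m c : ℕ) (hm : 1 ≤ m) :
    ((Finset.univ : Finset (Fin (m * m))).filter (fun k => k.val / m + 1 = c)).card ≤ m := by
  classical
  have := Finset.card_le_card_of_injOn
    (f := fun k : Fin (m * m) => (⟨k.val % m, Nat.mod_lt _ hm⟩ : Fin m))
    (s := (Finset.univ : Finset (Fin (m * m))).filter (fun k => k.val / m + 1 = c))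
    (t := Finset.univ)
    (fun _ _ => Finset.mem_univ _)
    (by
      intro a ha b hb hab
      simp only [Finset.mem_coe, Finset.mem_filter] at ha hb
      have h1 : a.val % m = b.val % m := by
        have := congrArg Fin.val hab
        simpa using this
      have h2 : a.val / m = b.val / m := Nat.add_right_cancel (ha.2.trans hb.2.symm)
      exact Fin.ext (by
        rw [← Nat.div_add_mod a.val m, ← Nat.div_add_mod b.val m, h1, h2]))
  simpa using this

theorem stmt_10 (m : ℕ) (hm : 1 ≤ m)
    (g : Fin (m * m) → ℕ) (hg : ∀ k, g k = k.val / m + 1)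
    (α : Fin (m * m) → Fin (m * m) → ℝ)
    (hdiag : ∀ k, α k k = (g k : ℝ))
    (hcross : ∀ i j, i ≠ j → α i j = if g i ≤ g j then (g j : ℝ) - 1 else 0) :
    (∀ T : Finset (Fin (m * m)), binSum α T ≤ (m : ℝ)) ∧ Dbin α = (m : ℝ) := by
  classical
  have hgle : ∀ k : Fin (m * m), g k ≤ m := by
    intro k
    rw [hg]
    exact Nat.div_lt_iff_lt_mul (by omega) |>.mpr k.isLt
  have hg1 : ∀ k : Fin (m * m), 1 ≤ g k := by
    intro k; rw [hg]; exact Nat.succ_le_succ (Nat.zero_le _)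
  have hub : ∀ T : Finset (Fin (m * m)), binSum α T ≤ (m : ℝ) := by
    intro T
    rcases T.eq_empty_or_nonempty with rfl | hT
    · have h0 : binSum α ∅ = 0 := by simp [binSum]
      rw [h0]; positivity
    obtain ⟨k₀, hk₀T, hk₀⟩ := T.exists_mem_eq_sup' hT g
    set G : ℕ := T.sup' hT g with hGdef
    have hGle : (G : ℕ) ≤ m := hk₀ ▸ hgle k₀
    have hG1 : 1 ≤ G := hk₀ ▸ hg1 k₀
    have hle : ∀ k ∈ T, g k ≤ G := fun k hk => Finset.le_sup' g hk
    by_cases hA : ∃ k₁ ∈ T, k₁ ≠ k₀ ∧ g k₁ = G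
    · -- at least two users in the top group: each term ≤ 1 if top, 0 else
      obtain ⟨k₁, hk₁T, hk₁ne, hk₁⟩ := hA
      have hterm : ∀ k ∈ T,
          pPart (α k k - ((T.erase k).fold max 0 fun j => α k j))
            ≤ if g k = G then (1 : ℝ) else 0 := by
        intro k hkT
        obtain ⟨j, hjT, hjne, hjG⟩ : ∃ j ∈ T, j ≠ k ∧ g j = G := by
          by_cases hkk : k = k₀
          · exact ⟨k₁, hk₁T, hkk ▸ hk₁ne, hk₁⟩
          · exact ⟨k₀, hk₀T, fun h => hkk h.symm, hk₀.symm⟩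
        have hαkj : α k j = (G : ℝ) - 1 := by
          rw [hcross k j (fun h => hjne h.symm), hjG, if_pos (hjG ▸ hle k hkT)]
        have hM : (G : ℝ) - 1 ≤ (T.erase k).fold max 0 fun j => α k j := by
          rw [Finset.le_fold_max]
          exact Or.inr ⟨j, Finset.mem_erase.mpr ⟨hjne, hjT⟩, hαkj.ge⟩
        have h1 : pPart (α k k - ((T.erase k).fold max 0 fun j => α k j))
            ≤ pPart ((g k : ℝ) - ((G : ℝ) - 1)) := by
          apply pPart_mono
          rw [hdiag k]
          linarith
        refine h1.trans ?_
        by_cases hkG : g k = G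
        · rw [if_pos hkG, hkG]
          simp [pPart]
        · rw [if_neg hkG]
          have : g k ≤ G - 1 := by have := hle k hkT; omega
          have hc : (g k : ℝ) ≤ (G : ℝ) - 1 := by
            have : (g k : ℝ) ≤ ((G - 1 : ℕ) : ℝ) := by exact_mod_cast this
            rw [Nat.cast_sub hG1] at this; simpa using this
          rw [pPart_nonpos (by linarith)]
      calc binSum α T ≤ ∑ k ∈ T, if g k = G then (1 : ℝ) else 0 :=
            Finset.sum_le_sum hterm
        _ ≤ ∑ k : Fin (m * m), if g k = G then (1 : ℝ) else 0 := by
            apply Finset.sum_le_sum_of_subset_of_nonneg (Finset.subset_univ T)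
            intro i _ _
            split <;> norm_num
        _ = ((Finset.univ.filter (fun k : Fin (m * m) => g k = G)).card : ℝ) := by
            rw [Finset.sum_boole]
        _ ≤ (m : ℝ) := by
            have : (Finset.univ.filter (fun k : Fin (m * m) => g k = G)).card ≤ m := by
              have heq : (Finset.univ.filter (fun k : Fin (m * m) => g k = G))
                  = (Finset.univ.filter (fun k : Fin (m * m) => k.val / m + 1 = G)) := by
                apply Finset.filter_congr; intro k _; simp [hg k]
              rw [heq]; exact card_group_le m G hm
            exact_mod_cast this
    · -- unique top user k₀
      push_neg at hA
      have hlt : ∀ k ∈ T, k ≠ k₀ → g k < G := by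
        intro k hk hne
        exact lt_of_le_of_ne (hle k hk) (hA k hk hne)
      have hzero : ∀ k ∈ T.erase k₀,
          pPart (α k k - ((T.erase k).fold max 0 fun j => α k j)) = 0 := by
        intro k hk
        obtain ⟨hne, hkT⟩ := Finset.mem_erase.mp hk
        have hαk0 : α k k₀ = (G : ℝ) - 1 := by
          rw [hcross k k₀ hne, hk₀.symm, if_pos (hle k hkT)]
        have hM : (G : ℝ) - 1 ≤ (T.erase k).fold max 0 fun j => α k j := by
          rw [Finset.le_fold_max]
          exact Or.inr ⟨k₀, Finset.mem_erase.mpr ⟨fun h => hne h.symm, hk₀T⟩, hαk0.ge⟩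
        have : g k ≤ G - 1 := by have := hlt k hkT hne; omega
        have hc : (g k : ℝ) ≤ (G : ℝ) - 1 := by
          have : (g k : ℝ) ≤ ((G - 1 : ℕ) : ℝ) := by exact_mod_cast this
          rw [Nat.cast_sub hG1] at this; simpa using this
        apply pPart_nonpos
        rw [hdiag k]
        linarith
      have hsplit : binSum α T
          = pPart (α k₀ k₀ - ((T.erase k₀).fold max 0 fun j => α k₀ j))
            + ∑ k ∈ T.erase k₀, pPart (α k k - ((T.erase k).fold max 0 fun j => α k j)) := by
        rw [binSum, ← Finset.add_sum_erase _ _ hk₀T]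
      rw [hsplit, Finset.sum_eq_zero hzero, add_zero]
      have hMnn : (0 : ℝ) ≤ (T.erase k₀).fold max 0 fun j => α k₀ j := by
        rw [Finset.le_fold_max]; exact Or.inl le_rfl
      have : pPart (α k₀ k₀ - ((T.erase k₀).fold max 0 fun j => α k₀ j))
          ≤ pPart ((G : ℝ)) := by
        apply pPart_mono
        rw [hdiag k₀, hk₀.symm]
        linarith
      refine this.trans ?_
      have : pPart ((G : ℝ)) = (G : ℝ) := max_eq_left (by positivity)
      rw [this]
      exact_mod_cast hGle
  refine ⟨hub, le_antisymm ?_ ?_⟩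
  · exact Finset.sup'_le _ _ fun T _ => hub T
  · -- achievability via the singleton of a user in the top group
    obtain ⟨n, rfl⟩ : ∃ n, m = n + 1 := ⟨m - 1, by omega⟩
    have hlt : (n + 1) * (n + 1) - 1 < (n + 1) * (n + 1) :=
      Nat.sub_lt (by positivity) one_pos
    set k : Fin ((n + 1) * (n + 1)) := ⟨(n + 1) * (n + 1) - 1, hlt⟩
    have hkval : k.val = (n + 1) * n + n := by
      show (n + 1) * (n + 1) - 1 = (n + 1) * n + n
      have he : (n + 1) * (n + 1) = (n + 1) * n + (n + 1) := by ring
      omega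
    have hdiv : k.val / (n + 1) = n := by
      rw [hkval, Nat.mul_add_div (by omega), Nat.div_eq_of_lt (by omega)]
      omega
    have hgk : g k = n + 1 := by rw [hg, hdiv]
    have hbs : binSum α {k} = ((n + 1 : ℕ) : ℝ) := by
      rw [binSum, Finset.sum_singleton, Finset.erase_singleton, Finset.fold_empty,
        hdiag k, hgk, sub_zero]
      exact max_eq_left (by positivity)
    calc ((n + 1 : ℕ) : ℝ) = binSum α {k} := hbs.symm
      _ ≤ Dbin α := Finset.le_sup' _ (Finset.mem_univ _)
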